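/- arXiv:1704.02544 — 6 statements merged into one kernel-verified Lean document; each statement's English description precedes it below -/
import Mathlib

section
/- Let c ∈ ℝ^S be strictly positive componentwise, α ∈ (0,1), and T the Bellman operator T J = max_a (g_a + α P_a J) with fixed point J*. Then J* is the unique minimizer of cᵀJ over the set {J ∈ ℝ^S : J ≥ T J}, and min{cᵀJ : J ≥ T J} = cᵀJ*. -/
open Matrix

/-- for strictly positive c, the fixed point J* of the Bellman
operator is the unique minimizer of cᵀJ over the superharmonic set
{J : J ≥ T J}, and the minimum value is cᵀJ*. -/
theorem stmt7 {S A : Type*} [Fintype S] [Nonempty S] [Fintype A] [Nonempty A]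
    (α : ℝ) (hα0 : 0 < α) (hα1 : α < 1)
    (c : S → ℝ) (hc : ∀ s, 0 < c s)
    (g : A → S → ℝ) (P : A → Matrix S S ℝ)
    (hPnn : ∀ a s s', 0 ≤ P a s s') (hProw : ∀ a s, ∑ s', P a s s' = 1)
    (Jstar : S → ℝ)
    (hfix : (fun s => ⨆ a, (g a s + α * (P a).mulVec Jstar s)) = Jstar) :
    ((fun s => ⨆ a, (g a s + α * (P a).mulVec Jstar s)) ≤ Jstar) ∧
    (∀ J : S → ℝ, (fun s => ⨆ a, (g a s + α * (P a).mulVec J s)) ≤ J →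
        c ⬝ᵥ Jstar ≤ c ⬝ᵥ J) ∧
    (∀ J : S → ℝ, (fun s => ⨆ a, (g a s + α * (P a).mulVec J s)) ≤ J →
        c ⬝ᵥ J = c ⬝ᵥ Jstar → J = Jstar) := by
  have key : ∀ J : S → ℝ, (fun s => ⨆ a, (g a s + α * (P a).mulVec J s)) ≤ J →
      ∀ s, Jstar s ≤ J s := by
    intro J hJ
    obtain ⟨s₀, hs₀⟩ := Finite.exists_max (fun s => Jstar s - J s)
    set M := Jstar s₀ - J s₀ with hM
    have hMle : M ≤ α * M := by
      obtain ⟨a₀, ha₀⟩ := Finite.exists_max (fun a => g a s₀ + α * (P a).mulVec Jstar s₀)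
      have h1 : Jstar s₀ = g a₀ s₀ + α * (P a₀).mulVec Jstar s₀ := by
        conv_lhs => rw [← hfix]
        beta_reduce
        exact le_antisymm (ciSup_le ha₀)
          (le_ciSup (Finite.bddAbove_range fun a => g a s₀ + α * (P a).mulVec Jstar s₀) a₀)
      have h2 : g a₀ s₀ + α * (P a₀).mulVec J s₀ ≤ J s₀ :=
        le_trans
          (le_ciSup (Finite.bddAbove_range fun a => g a s₀ + α * (P a).mulVec J s₀) a₀)
          (hJ s₀)
      have h3 : M ≤ α * ((P a₀).mulVec Jstar s₀ - (P a₀).mulVec J s₀) := by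
        rw [hM, h1]; linarith [h2]
      have h4 : (P a₀).mulVec Jstar s₀ - (P a₀).mulVec J s₀ ≤ M := by
        have : (P a₀).mulVec Jstar s₀ - (P a₀).mulVec J s₀
            = ∑ s', P a₀ s₀ s' * (Jstar s' - J s') := by
          simp [mulVec, dotProduct, mul_sub, Finset.sum_sub_distrib]
        rw [this]
        calc ∑ s', P a₀ s₀ s' * (Jstar s' - J s')
            ≤ ∑ s', P a₀ s₀ s' * M := by
              refine Finset.sum_le_sum fun s' _ => ?_
              exact mul_le_mul_of_nonneg_left (hs₀ s') (hPnn a₀ s₀ s')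
          _ = M := by rw [← Finset.sum_mul, hProw, one_mul]
      calc M ≤ α * ((P a₀).mulVec Jstar s₀ - (P a₀).mulVec J s₀) := h3
        _ ≤ α * M := mul_le_mul_of_nonneg_left h4 hα0.le
    have hM0 : M ≤ 0 := by nlinarith
    intro s
    have := hs₀ s
    linarith
  refine ⟨le_of_eq hfix, fun J hJ => ?_, fun J hJ hcJ => ?_⟩
  · simp only [dotProduct]
    exact Finset.sum_le_sum fun s _ =>
      mul_le_mul_of_nonneg_left (key J hJ s) (hc s).le
  · have hle := key J hJ
    have hsum : ∑ s, c s * (J s - Jstar s) = 0 := by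
      simp only [dotProduct] at hcJ
      simp [mul_sub, Finset.sum_sub_distrib, hcJ]
    have := (Finset.sum_eq_zero_iff_of_nonneg (fun s _ =>
      mul_nonneg (hc s).le (by linarith [hle s]))).mp hsum
    funext s
    have hs := this s (Finset.mem_univ s)
    have := (hc s).ne'
    rcases mul_eq_zero.mp hs with h | h
    · exact absurd h this
    · linarith
end

section
/- Let Φ ∈ ℝ^{S×k} and suppose ψ = Φ r₀ for some r₀ ∈ ℝ^k, where ψ : S → (0,∞). Define J*_ALP(s) = inf{ rᵀφ(s) : Φ r ≥ J*, r ∈ ℝ^k } where φ(s)ᵀ is the s-th row of Φ. Let ε = inf_{r ∈ ℝ^k} ‖J* − Φ r‖_{∞,ψ} and assume the infimum is attained. Then ‖J* − J*_ALP‖_{∞,ψ} ≤ 2ε. -/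
open Matrix

/-- with ψ = Φ r₀ in the span of the features, and ε the (attained)
best weighted-max-norm approximation error of J* in the span of Φ,
‖J* − J*_ALP‖_{∞,ψ} ≤ 2ε, where J*_ALP(s) = inf{rᵀφ(s) : Φ r ≥ J*}. -/
theorem stmt10 {S : Type*} [Fintype S] [Nonempty S] {k : ℕ}
    (Φ : Matrix S (Fin k) ℝ) (r₀ : Fin k → ℝ)
    (ψ : S → ℝ) (hψpos : ∀ s, 0 < ψ s) (hψspan : ψ = Φ.mulVec r₀)
    (Jstar : S → ℝ) (ε : ℝ) (rstar : Fin k → ℝ)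
    (hrstar : (⨆ s, |Jstar s - Φ.mulVec rstar s| / ψ s) = ε)
    (hmin : ∀ r : Fin k → ℝ, ε ≤ ⨆ s, |Jstar s - Φ.mulVec r s| / ψ s)
    (JALP : S → ℝ)
    (hJALP : ∀ s, JALP s =
      sInf {x : ℝ | ∃ r : Fin k → ℝ, Jstar ≤ Φ.mulVec r ∧ x = Φ.mulVec r s}) :
    (⨆ s, |Jstar s - JALP s| / ψ s) ≤ 2 * ε := by
  -- each pointwise error of rstar is ≤ ε
  have hbdd : ∀ (r : Fin k → ℝ), BddAbove (Set.range fun s => |Jstar s - Φ.mulVec r s| / ψ s) :=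
    fun r => (Set.finite_range _).bddAbove
  have hpt : ∀ s, |Jstar s - Φ.mulVec rstar s| ≤ ε * ψ s := by
    intro s
    have h1 : |Jstar s - Φ.mulVec rstar s| / ψ s ≤ ε := by
      rw [← hrstar]; exact le_ciSup (hbdd rstar) s
    have := (div_le_iff₀ (hψpos s)).mp h1
    linarith
  have hε0 : 0 ≤ ε := by
    obtain ⟨s⟩ := ‹Nonempty S›
    have := hpt s
    have habs : (0:ℝ) ≤ |Jstar s - Φ.mulVec rstar s| := abs_nonneg _
    nlinarith [hψpos s]
  -- feasible point r' = rstar + ε • r₀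
  set r' : Fin k → ℝ := rstar + ε • r₀ with hr'
  have hr'val : ∀ s, Φ.mulVec r' s = Φ.mulVec rstar s + ε * ψ s := by
    intro s
    rw [hψspan]
    simp [hr', Matrix.mulVec_add, Matrix.mulVec_smul, smul_eq_mul]
  have hfeas : Jstar ≤ Φ.mulVec r' := by
    intro s
    rw [hr'val s]
    have := hpt s
    have := abs_le.mp this
    linarith [this.1]
  -- the constraint set at s
  have hne : ∀ s, (Φ.mulVec r' s) ∈ {x : ℝ | ∃ r : Fin k → ℝ, Jstar ≤ Φ.mulVec r ∧ x = Φ.mulVec r s} :=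
    fun s => ⟨r', hfeas, rfl⟩
  have hlb : ∀ s, ∀ x ∈ {x : ℝ | ∃ r : Fin k → ℝ, Jstar ≤ Φ.mulVec r ∧ x = Φ.mulVec r s},
      Jstar s ≤ x := by
    rintro s x ⟨r, hr, rfl⟩
    exact hr s
  -- JALP s ≥ Jstar s and JALP s ≤ Φ r' s
  have hge : ∀ s, Jstar s ≤ JALP s := by
    intro s; rw [hJALP s]
    exact le_csInf ⟨_, hne s⟩ (hlb s)
  have hle : ∀ s, JALP s ≤ Φ.mulVec rstar s + ε * ψ s := by
    intro s; rw [hJALP s, ← hr'val s]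
    exact csInf_le ⟨Jstar s, fun x hx => hlb s x hx⟩ (hne s)
  apply ciSup_le
  intro s
  rw [div_le_iff₀ (hψpos s)]
  have h1 := hge s
  have h2 := hle s
  have h3 := (abs_le.mp (hpt s)).2
  have h4 := (abs_le.mp (hpt s)).1
  rw [abs_of_nonpos (by linarith)]
  linarith
end

section
/- Let Φ ∈ ℝ^{S×k} with rows φ(s)ᵀ, let S₀ ⊆ S, and let Λ ∈ ℝ₊^{S×S₀} satisfy φ(s) = Σ_{s'∈S₀} Λ(s,s') φ(s') for all s ∈ S. Let ψ : S → (0,∞), r* ∈ ℝ^k with ‖J* − Φr*‖_{∞,ψ} = ε. Define J*_ALP(s) = inf{rᵀφ(s) : Φr ≥ J*} and J*_LRA(s) = inf{rᵀφ(s) : (Φr)(s') ≥ J*(s') for all s' ∈ S₀}, and assume both infima are attained for every s. Then ‖J*_ALP − J*_LRA‖_{∞,ψ} ≤ ‖J*_ALP − J*‖_{∞,ψ} + (1 + ‖Λψ‖_{∞,ψ})·ε, where (Λψ)(s) = Σ_{s'∈S₀} Λ(s,s')ψ(s'). -/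
open Matrix

/-- with a conic cover Λ of the feature vectors by the selected
states S₀, ‖J*_ALP − J*_LRA‖_{∞,ψ} ≤ ‖J*_ALP − J*‖_{∞,ψ} + (1 + ‖Λψ‖_{∞,ψ})·ε. -/
theorem stmt11 {S : Type*} [Fintype S] [Nonempty S] {k : ℕ}
    (Φ : Matrix S (Fin k) ℝ) (S₀ : Finset S)
    (Λ : S → S → ℝ) (hΛnn : ∀ s s', 0 ≤ Λ s s')
    (hcone : ∀ s j, Φ s j = ∑ s' ∈ S₀, Λ s s' * Φ s' j)
    (ψ : S → ℝ) (hψpos : ∀ s, 0 < ψ s)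
    (Jstar : S → ℝ) (ε : ℝ) (rstar : Fin k → ℝ)
    (hrstar : (⨆ s, |Jstar s - Φ.mulVec rstar s| / ψ s) = ε)
    (JALP JLRA : S → ℝ)
    (hJALP : ∀ s, JALP s =
      sInf {x : ℝ | ∃ r : Fin k → ℝ, Jstar ≤ Φ.mulVec r ∧ x = Φ.mulVec r s})
    (hJLRA : ∀ s, JLRA s =
      sInf {x : ℝ | ∃ r : Fin k → ℝ,
        (∀ s' ∈ S₀, Jstar s' ≤ Φ.mulVec r s') ∧ x = Φ.mulVec r s})
    (hALPatt : ∀ s, ∃ r : Fin k → ℝ,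
      Jstar ≤ Φ.mulVec r ∧ Φ.mulVec r s = JALP s)
    (hLRAatt : ∀ s, ∃ r : Fin k → ℝ,
      (∀ s' ∈ S₀, Jstar s' ≤ Φ.mulVec r s') ∧ Φ.mulVec r s = JLRA s) :
    (⨆ s, |JALP s - JLRA s| / ψ s)
      ≤ (⨆ s, |JALP s - Jstar s| / ψ s)
        + (1 + ⨆ s, (∑ s' ∈ S₀, Λ s s' * ψ s') / ψ s) * ε := by
  -- decomposition of Φ.mulVec along the cone
  have hdecomp : ∀ (r : Fin k → ℝ) (s : S),
      Φ.mulVec r s = ∑ s' ∈ S₀, Λ s s' * Φ.mulVec r s' := by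
    intro r s
    simp only [Matrix.mulVec, dotProduct]
    calc ∑ j, Φ s j * r j
        = ∑ j, ∑ s' ∈ S₀, Λ s s' * Φ s' j * r j := by
          refine Finset.sum_congr rfl fun j _ => ?_
          rw [hcone s j, Finset.sum_mul]
      _ = ∑ s' ∈ S₀, Λ s s' * ∑ j, Φ s' j * r j := by
          rw [Finset.sum_comm]
          exact Finset.sum_congr rfl fun s' _ => by
            rw [Finset.mul_sum]; exact Finset.sum_congr rfl fun j _ => by ring
  -- ε bounds
  have hrb : ∀ s, |Jstar s - Φ.mulVec rstar s| ≤ ε * ψ s := by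
    intro s
    have hb : BddAbove (Set.range fun s => |Jstar s - Φ.mulVec rstar s| / ψ s) :=
      (Set.finite_range _).bddAbove
    have := le_ciSup hb s
    rw [hrstar] at this
    calc |Jstar s - Φ.mulVec rstar s|
        = |Jstar s - Φ.mulVec rstar s| / ψ s * ψ s := by
          exact (div_mul_cancel₀ _ (hψpos s).ne').symm
      _ ≤ ε * ψ s := by
          exact mul_le_mul_of_nonneg_right this (hψpos s).le
  have hεnn : 0 ≤ ε := by
    obtain ⟨s⟩ := (inferInstance : Nonempty S)
    have hb : BddAbove (Set.range fun s => |Jstar s - Φ.mulVec rstar s| / ψ s) :=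
      (Set.finite_range _).bddAbove
    have := le_ciSup hb s
    rw [hrstar] at this
    exact le_trans (div_nonneg (abs_nonneg _) (hψpos s).le) this
  set A := ⨆ s, |JALP s - Jstar s| / ψ s with hA
  set L := ⨆ s, (∑ s' ∈ S₀, Λ s s' * ψ s') / ψ s with hL
  have hAle : ∀ s, |JALP s - Jstar s| ≤ A * ψ s := by
    intro s
    have hb : BddAbove (Set.range fun s => |JALP s - Jstar s| / ψ s) :=
      (Set.finite_range _).bddAbove
    have := le_ciSup hb s
    calc |JALP s - Jstar s| = |JALP s - Jstar s| / ψ s * ψ s := (div_mul_cancel₀ _ (hψpos s).ne').symm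
      _ ≤ A * ψ s := mul_le_mul_of_nonneg_right this (hψpos s).le
  have hLle : ∀ s, (∑ s' ∈ S₀, Λ s s' * ψ s') ≤ L * ψ s := by
    intro s
    have hb : BddAbove (Set.range fun s => (∑ s' ∈ S₀, Λ s s' * ψ s') / ψ s) :=
      (Set.finite_range _).bddAbove
    have := le_ciSup hb s
    calc (∑ s' ∈ S₀, Λ s s' * ψ s')
        = (∑ s' ∈ S₀, Λ s s' * ψ s') / ψ s * ψ s := (div_mul_cancel₀ _ (hψpos s).ne').symm
      _ ≤ L * ψ s := mul_le_mul_of_nonneg_right this (hψpos s).le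
  -- JLRA ≤ JALP
  have hBdd : ∀ s, BddBelow {x : ℝ | ∃ r : Fin k → ℝ,
      (∀ s' ∈ S₀, Jstar s' ≤ Φ.mulVec r s') ∧ x = Φ.mulVec r s} := by
    intro s
    refine ⟨∑ s' ∈ S₀, Λ s s' * Jstar s', ?_⟩
    rintro x ⟨r, hr, rfl⟩
    rw [hdecomp r s]
    exact Finset.sum_le_sum fun s' hs' =>
      mul_le_mul_of_nonneg_left (hr s' hs') (hΛnn s s')
  have hle : ∀ s, JLRA s ≤ JALP s := by
    intro s
    obtain ⟨r, hr, hrs⟩ := hALPatt s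
    rw [hJLRA s, ← hrs]
    exact csInf_le (hBdd s) ⟨r, fun s' _ => hr s', rfl⟩
  -- lower bound on JLRA
  have hlow : ∀ s, Jstar s - ε * ψ s - ε * (∑ s' ∈ S₀, Λ s s' * ψ s') ≤ JLRA s := by
    intro s
    obtain ⟨r, hr, hrs⟩ := hLRAatt s
    rw [← hrs, hdecomp r s]
    have h1 : ∑ s' ∈ S₀, Λ s s' * (Φ.mulVec rstar s' - ε * ψ s')
        ≤ ∑ s' ∈ S₀, Λ s s' * Φ.mulVec r s' := by
      refine Finset.sum_le_sum fun s' hs' => mul_le_mul_of_nonneg_left ?_ (hΛnn s s')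
      have h2 := hrb s'
      have h3 := hr s' hs'
      have := abs_le.1 h2
      linarith [this.2]
    have h4 : Φ.mulVec rstar s - ε * (∑ s' ∈ S₀, Λ s s' * ψ s')
        = ∑ s' ∈ S₀, Λ s s' * (Φ.mulVec rstar s' - ε * ψ s') := by
      rw [hdecomp rstar s, Finset.mul_sum, ← Finset.sum_sub_distrib]
      exact Finset.sum_congr rfl fun s' _ => by ring
    have h5 := abs_le.1 (hrb s)
    linarith [h5.1]
  refine ciSup_le fun s => ?_
  have hψ := hψpos s
  rw [div_le_iff₀ hψ]
  have habs : |JALP s - JLRA s| = JALP s - JLRA s := abs_of_nonneg (by linarith [hle s])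
  rw [habs]
  have h6 := hAle s
  have h7 := abs_le.1 h6
  have h8 := hlow s
  have h9 : ε * (∑ s' ∈ S₀, Λ s s' * ψ s') ≤ ε * (L * ψ s) :=
    mul_le_mul_of_nonneg_left (hLle s) hεnn
  nlinarith [h7.2, h7.1]
end

section
/- Consider the linear program inf{ dᵀx : A x ≥ b, x ∈ ℝ^v } with A ∈ ℝ^{u×v}, b ∈ ℝ^u, d ∈ ℝ^v, and suppose the feasible set is nonempty. Then the infimum is > −∞ if and only if d lies in the conic hull of the rows of A, i.e., there exists y ∈ ℝ₊^u with Aᵀy = d. -/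
open Matrix

open Finset in

lemma cone_cara {u n : ℕ} (r : Fin u → (Fin n → ℝ)) :
    ∀ (k : ℕ) (y : Fin u → ℝ), (Finset.univ.filter (fun i => y i ≠ 0)).card ≤ k →
      (∀ i, 0 ≤ y i) →
      ∃ y' : Fin u → ℝ, (∀ i, 0 ≤ y' i) ∧
        LinearIndependent ℝ (fun i : ↥(Finset.univ.filter (fun i => y' i ≠ 0)) => r i) ∧
        ∑ i, y' i • r i = ∑ i, y i • r i := by
  intro k
  induction k with
  | zero =>
      intro y hcard hy
      refine ⟨y, hy, ?_, rfl⟩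
      have h0 : (Finset.univ.filter (fun i => y i ≠ 0)) = ∅ :=
        Finset.card_eq_zero.mp (Nat.le_zero.mp hcard)
      haveI : IsEmpty ↥(Finset.univ.filter (fun i => y i ≠ 0)) := by
        rw [h0]; exact ⟨fun x => absurd x.2 (Finset.notMem_empty _)⟩
      exact linearIndependent_empty_type
  | succ k ih =>
      intro y hcard hy
      by_cases hLI : LinearIndependent ℝ
          (fun i : ↥(Finset.univ.filter (fun i => y i ≠ 0)) => r i)
      · exact ⟨y, hy, hLI, rfl⟩
      · set s := Finset.univ.filter (fun i => y i ≠ 0) with hs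
        obtain ⟨c, hcsum, j0, hj0⟩ := Fintype.not_linearIndependent_iff.mp hLI
        -- wlog c j0 > 0
        obtain ⟨c, hcsum, j0, hj0⟩ :
            ∃ c : ↥s → ℝ, ∑ i, c i • r i = 0 ∧ ∃ j0, 0 < c j0 := by
          rcases lt_or_gt_of_ne hj0 with h | h
          · exact ⟨-c, by simpa [neg_smul] using congrArg Neg.neg hcsum, j0, by simpa using h⟩
          · exact ⟨c, hcsum, j0, h⟩
        classical
        set cc : Fin u → ℝ := fun i => if h : i ∈ s then c ⟨i, h⟩ else 0 with hcc
        have hccsum : ∑ i, cc i • r i = 0 := by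
          rw [← Finset.sum_subset (Finset.subset_univ s)
            (by intro i _ hi; simp [hcc, hi])]
          rw [← Finset.sum_attach s (fun i => cc i • r i)]
          simpa [hcc] using hcsum
        set T := s.filter (fun i => 0 < cc i) with hT
        have hTne : T.Nonempty := ⟨j0, by
          simp only [hT, Finset.mem_filter]
          exact ⟨j0.2, by simpa [hcc, j0.2] using hj0⟩⟩
        set t := T.inf' hTne (fun i => y i / cc i) with ht
        have ht0 : 0 ≤ t := by
          apply Finset.le_inf'
          intro i hi
          have : 0 < cc i := (Finset.mem_filter.mp hi).2
          exact div_nonneg (hy i) this.le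
        obtain ⟨i0, hi0T, hi0⟩ := Finset.exists_mem_eq_inf' hTne (fun i => y i / cc i)
        have hcci0 : 0 < cc i0 := (Finset.mem_filter.mp hi0T).2
        set y'' : Fin u → ℝ := fun i => y i - t * cc i with hy''
        have hynn : ∀ i, 0 ≤ y'' i := by
          intro i
          by_cases hi : i ∈ s
          · by_cases hpos : 0 < cc i
            · have hit : i ∈ T := Finset.mem_filter.mpr ⟨hi, hpos⟩
              have := Finset.inf'_le (fun i => y i / cc i) hit
              simp only [hy'']
              rw [sub_nonneg, ← le_div_iff₀ hpos]
              exact this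
            · have : t * cc i ≤ 0 :=
                mul_nonpos_of_nonneg_of_nonpos ht0 (not_lt.mp hpos)
              simp only [hy'']; linarith [hy i]
          · have hyi : y i = 0 := by
              by_contra h
              exact hi (Finset.mem_filter.mpr ⟨Finset.mem_univ i, h⟩)
            simp [hy'', hyi, hcc, hi]
        have hyi0 : y'' i0 = 0 := by
          show y i0 - t * cc i0 = 0
          rw [ht, hi0, div_mul_cancel₀ _ hcci0.ne', sub_self]
        have hsum : ∑ i, y'' i • r i = ∑ i, y i • r i := by
          simp only [hy'', sub_smul, Finset.sum_sub_distrib, mul_smul]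
          rw [← Finset.smul_sum, hccsum, smul_zero, sub_zero]
        have hsupp : Finset.univ.filter (fun i => y'' i ≠ 0) ⊆ s.erase i0 := by
          intro i hi
          simp only [Finset.mem_filter] at hi
          apply Finset.mem_erase.mpr
          constructor
          · rintro rfl; exact hi.2 hyi0
          · by_contra h
            have hyi : y i = 0 := by
              by_contra h'
              exact h (Finset.mem_filter.mpr ⟨Finset.mem_univ i, h'⟩)
            exact hi.2 (by simp [hy'', hyi, hcc, h])
        have hi0s : i0 ∈ s := (Finset.mem_filter.mp hi0T).1
        have hcard' : (Finset.univ.filter (fun i => y'' i ≠ 0)).card ≤ k := by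
          calc (Finset.univ.filter (fun i => y'' i ≠ 0)).card
              ≤ (s.erase i0).card := Finset.card_le_card hsupp
            _ = s.card - 1 := Finset.card_erase_of_mem hi0s
            _ ≤ k := by
                have h1 : 1 ≤ s.card := Finset.card_pos.mpr ⟨i0, hi0s⟩
                omega
        obtain ⟨y', h1, h2, h3⟩ := ih y'' hcard' hynn
        exact ⟨y', h1, h2, h3.trans hsum⟩

lemma cone_isClosed {u n : ℕ} (r : Fin u → (Fin n → ℝ)) :
    IsClosed {x : Fin n → ℝ | ∃ y : Fin u → ℝ, (∀ i, 0 ≤ y i) ∧ x = ∑ i, y i • r i} := by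
  classical
  -- the cone over a linearly independent finite family, as image of the positive orthant
  have key : ∀ s : Finset (Fin u), LinearIndependent ℝ (fun i : ↥s => r i) →
      IsClosed ((fun g : ↥s → ℝ => ∑ i, g i • r (i : Fin u)) '' {g | ∀ i, 0 ≤ g i}) := by
    intro s hLI
    set L : (↥s → ℝ) →ₗ[ℝ] (Fin n → ℝ) :=
      { toFun := fun g => ∑ i, g i • r (i : Fin u)
        map_add' := by
          intro g h
          simp [add_smul, Finset.sum_add_distrib]
        map_smul' := by
          intro cm g
          simp [smul_smul, Finset.smul_sum] } with hL
    have hker : LinearMap.ker L = ⊥ := by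
      rw [LinearMap.ker_eq_bot']
      intro g hg
      funext i
      exact Fintype.linearIndependent_iff.mp hLI g hg i
    have hemb := LinearMap.isClosedEmbedding_of_injective (𝕜 := ℝ) hker
    have horth : IsClosed {g : ↥s → ℝ | ∀ i, 0 ≤ g i} := by
      have : {g : ↥s → ℝ | ∀ i, 0 ≤ g i} = ⋂ i, {g | 0 ≤ g i} := by
        ext g; simp [Set.mem_iInter]
      rw [this]
      exact isClosed_iInter fun i =>
        isClosed_le continuous_const (continuous_apply i)
    exact hemb.isClosedMap _ horth
  -- write the cone as a finite union of such images
  have hunion : {x : Fin n → ℝ | ∃ y : Fin u → ℝ, (∀ i, 0 ≤ y i) ∧ x = ∑ i, y i • r i} =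
      ⋃ s : Finset (Fin u),
        if h : LinearIndependent ℝ (fun i : ↥s => r i) then
          ((fun g : ↥s → ℝ => ∑ i, g i • r (i : Fin u)) '' {g | ∀ i, 0 ≤ g i})
        else {0} := by
    ext x
    constructor
    · rintro ⟨y, hy, rfl⟩
      obtain ⟨y', hy', hLI, hsum⟩ := cone_cara r (Finset.univ.filter (fun i => y i ≠ 0)).card
        y le_rfl hy
      set s := Finset.univ.filter (fun i => y' i ≠ 0) with hs
      apply Set.mem_iUnion.mpr ⟨s, ?_⟩
      rw [dif_pos hLI]
      refine ⟨fun i => y' i, fun i => hy' i, ?_⟩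
      rw [← hsum]
      rw [← Finset.sum_subset (Finset.subset_univ s)
        (by intro i _ hi
            have : y' i = 0 := by
              by_contra h
              exact hi (Finset.mem_filter.mpr ⟨Finset.mem_univ i, h⟩)
            simp [this])]
      rw [← Finset.sum_attach s (fun i => y' i • r i)]
      rfl
    · intro hx
      obtain ⟨s, hxs⟩ := Set.mem_iUnion.mp hx
      by_cases h : LinearIndependent ℝ (fun i : ↥s => r i)
      · rw [dif_pos h] at hxs
        obtain ⟨g, hg, rfl⟩ := hxs
        refine ⟨fun i => if hi : i ∈ s then g ⟨i, hi⟩ else 0, ?_, ?_⟩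
        · intro i
          by_cases hi : i ∈ s
          · simpa [hi] using hg ⟨i, hi⟩
          · simp [hi]
        · rw [← Finset.sum_subset (Finset.subset_univ s)
            (by intro i _ hi; simp [hi])]
          rw [← Finset.sum_attach s
            (fun i => (if hi : i ∈ s then g ⟨i, hi⟩ else 0) • r i)]
          apply Finset.sum_congr rfl
          intro i _
          simp [i.2]
      · rw [dif_neg h] at hxs
        rw [Set.mem_singleton_iff] at hxs
        subst hxs
        exact ⟨0, fun i => le_rfl, by simp⟩
  rw [hunion]
  apply isClosed_iUnion_of_finite
  intro s
  by_cases h : LinearIndependent ℝ (fun i : ↥s => r i)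
  · rw [dif_pos h]; exact key s h
  · rw [dif_neg h]; exact isClosed_singleton

lemma farkas {u n : ℕ} (r : Fin u → (Fin n → ℝ)) (d : Fin n → ℝ)
    (h : ∀ x : Fin n → ℝ, (∀ i, 0 ≤ r i ⬝ᵥ x) → 0 ≤ d ⬝ᵥ x) :
    ∃ y : Fin u → ℝ, (∀ i, 0 ≤ y i) ∧ d = ∑ i, y i • r i := by
  classical
  set C := {x : Fin n → ℝ | ∃ y : Fin u → ℝ, (∀ i, 0 ≤ y i) ∧ x = ∑ i, y i • r i} with hC
  by_contra hd
  have hdC : d ∉ C := fun ⟨y, hy, hdy⟩ => hd ⟨y, hy, hdy⟩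
  set e := EuclideanSpace.equiv (Fin n) ℝ with he
  set K : ConvexCone ℝ (EuclideanSpace ℝ (Fin n)) :=
    { carrier := (⇑e) ⁻¹' C
      smul_mem' := by
        rintro c hc x ⟨y, hy, hx⟩
        refine ⟨fun i => c * y i, fun i => mul_nonneg hc.le (hy i), ?_⟩
        have : e (c • x) = c • e x := by simp
        rw [this, hx, Finset.smul_sum]
        simp [smul_smul]
      add_mem' := by
        rintro x ⟨y1, hy1, hx1⟩ x2 ⟨y2, hy2, hx2⟩
        refine ⟨fun i => y1 i + y2 i, fun i => add_nonneg (hy1 i) (hy2 i), ?_⟩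
        have : e (x + x2) = e x + e x2 := by simp
        rw [this, hx1, hx2, ← Finset.sum_add_distrib]
        simp [add_smul] } with hK
  have hKne : (K : Set (EuclideanSpace ℝ (Fin n))).Nonempty :=
    ⟨0, ⟨0, fun i => le_rfl, by simp⟩⟩
  have hKclosed : IsClosed (K : Set (EuclideanSpace ℝ (Fin n))) := by
    exact (cone_isClosed r).preimage e.continuous
  have hbK : e.symm d ∉ K := by
    intro hmem
    apply hdC
    have h2 : e (e.symm d) ∈ C := hmem
    simpa using h2
  set P : ProperCone ℝ (EuclideanSpace ℝ (Fin n)) :=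
    ⟨K.toPointedCone (ConvexCone.Pointed.of_nonempty_of_isClosed hKne hKclosed), hKclosed⟩
  obtain ⟨z, hz, hzb'⟩ := P.hyperplane_separation' (x₀ := e.symm d) hbK
  have hzb : inner ℝ z (e.symm d) < 0 := by rw [real_inner_comm]; exact hzb'
  set cvec : Fin n → ℝ := e z with hcvec
  have hAc : ∀ i, 0 ≤ r i ⬝ᵥ cvec := by
    intro i0
    have hmem : e.symm (r i0) ∈ K := by
      refine ⟨fun i => if i = i0 then 1 else 0, fun i => by positivity, ?_⟩
      simp [Finset.sum_ite_eq', ite_smul]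
    have := hz _ hmem
    rw [PiLp.inner_apply] at this
    have h' : 0 ≤ ∑ x, r i0 x * z.ofLp x := by
      simpa [dotProduct, RCLike.inner_apply, he, EuclideanSpace.equiv, mul_comm] using this
    exact h'
  have hdc : d ⬝ᵥ cvec < 0 := by
    rw [PiLp.inner_apply] at hzb
    simp only [RCLike.inner_apply, conj_trivial] at hzb
    calc d ⬝ᵥ cvec = ∑ i, z i * (e.symm d) i := by
          exact Finset.sum_congr rfl fun i _ => mul_comm _ _
      _ < 0 := by simpa [mul_comm] using hzb
  exact absurd (h cvec hAc) (not_le.mpr hdc)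

/-- for a feasible LP inf{dᵀx : Ax ≥ b}, the objective is bounded
below iff d lies in the conic hull of the rows of A, i.e. Aᵀy = d for some y ≥ 0. -/
theorem stmt15 {u v : ℕ} (A : Matrix (Fin u) (Fin v) ℝ) (b : Fin u → ℝ)
    (d : Fin v → ℝ) (hfeas : ∃ x : Fin v → ℝ, b ≤ A.mulVec x) :
    BddBelow {z : ℝ | ∃ x : Fin v → ℝ, b ≤ A.mulVec x ∧ z = d ⬝ᵥ x} ↔
      ∃ y : Fin u → ℝ, (∀ i, 0 ≤ y i) ∧ A.transpose.mulVec y = d := by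
  constructor
  · rintro ⟨m, hm⟩
    obtain ⟨x0, hx0⟩ := hfeas
    have hfar : ∀ c : Fin v → ℝ, (∀ i, 0 ≤ (fun j => A i j) ⬝ᵥ c) → 0 ≤ d ⬝ᵥ c := by
      intro c hc
      by_contra hneg
      push_neg at hneg
      set t : ℝ := max 0 ((m - 1 - d ⬝ᵥ x0) / (d ⬝ᵥ c)) with ht
      have ht0 : 0 ≤ t := le_max_left _ _
      have hfeas' : b ≤ A.mulVec (x0 + t • c) := by
        intro i
        rw [Matrix.mulVec_add, Matrix.mulVec_smul]
        have h1 : 0 ≤ t * A.mulVec c i := mul_nonneg ht0 (hc i)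
        have := hx0 i
        simp only [Pi.add_apply, Pi.smul_apply, smul_eq_mul]
        linarith
      have hz : (d ⬝ᵥ (x0 + t • c)) ∈
          {z : ℝ | ∃ x : Fin v → ℝ, b ≤ A.mulVec x ∧ z = d ⬝ᵥ x} :=
        ⟨x0 + t • c, hfeas', rfl⟩
      have hmle := hm hz
      have hexp : d ⬝ᵥ (x0 + t • c) = d ⬝ᵥ x0 + t * (d ⬝ᵥ c) := by
        rw [dotProduct_add, dotProduct_smul]; simp
      have htq : (m - 1 - d ⬝ᵥ x0) / (d ⬝ᵥ c) ≤ t := le_max_right _ _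
      have : t * (d ⬝ᵥ c) ≤ m - 1 - d ⬝ᵥ x0 := by
        have := mul_le_mul_of_nonpos_right htq hneg.le
        rwa [div_mul_cancel₀ _ hneg.ne] at this
      rw [hexp] at hmle
      linarith
    obtain ⟨y, hy, hd⟩ := farkas (fun i => fun j => A i j) d hfar
    refine ⟨y, hy, ?_⟩
    rw [hd]
    ext j
    simp [Matrix.mulVec, dotProduct, Matrix.transpose_apply, Finset.sum_apply, mul_comm]
  · rintro ⟨y, hy, hAy⟩
    refine ⟨b ⬝ᵥ y, ?_⟩
    rintro z ⟨x, hx, rfl⟩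
    have h1 : d ⬝ᵥ x = y ⬝ᵥ A.mulVec x := by
      rw [← hAy, Matrix.mulVec_transpose, ← Matrix.dotProduct_mulVec]
    rw [h1]
    rw [dotProduct_comm b y]
    apply Finset.sum_le_sum
    intro i _
    exact mul_le_mul_of_nonneg_left (hx i) (hy i)
end

section
/- In the setting of the operator Γ̂ defined by (Γ̂J)(s) = inf{ rᵀφ(s) : WᵀEΦr ≥ WᵀHJ }, assume ψ = Φr₀ for some r₀ ∈ ℝ^k, ψ > 0, β_ψ = α max_a ‖P_aψ‖_{∞,ψ} < 1, W is nonnegative, and Γ̂J is finite for all J. Then Γ̂ is a contraction with factor β_ψ with respect to ‖·‖_{∞,ψ}, and hence has a unique fixed point. -/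
open Matrix

/-- under ψ = Φr₀ with β_ψ < 1 and W nonnegative, the operator Γ̂
is a β_ψ-contraction in ‖·‖_{∞,ψ} and has a unique fixed point. -/
theorem stmt18 {S A : Type*} [Fintype S] [Nonempty S] [Fintype A] [Nonempty A]
    {k m : ℕ}
    (α : ℝ) (hα0 : 0 < α) (hα1 : α < 1)
    (g : A → S → ℝ) (P : A → Matrix S S ℝ)
    (hPnn : ∀ a s s', 0 ≤ P a s s') (hProw : ∀ a s, ∑ s', P a s s' = 1)
    (W : S × A → Fin m → ℝ) (hW : ∀ p i, 0 ≤ W p i)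
    (Φ : Matrix S (Fin k) ℝ) (r₀ : Fin k → ℝ)
    (ψ : S → ℝ) (hψpos : ∀ s, 0 < ψ s) (hψspan : ψ = Φ.mulVec r₀)
    (βψ : ℝ) (hβψ : βψ = α * ⨆ a, ⨆ s, |(P a).mulVec ψ s| / ψ s)
    (hβψ1 : βψ < 1)
    (Γhat : (S → ℝ) → S → ℝ)
    (hΓ : ∀ (J : S → ℝ) (s : S), Γhat J s =
      sInf {x : ℝ | ∃ r : Fin k → ℝ,
        (∀ i : Fin m,
          ∑ p : S × A, W p i * (g p.2 p.1 + α * (P p.2).mulVec J p.1)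
            ≤ ∑ p : S × A, W p i * Φ.mulVec r p.1) ∧
        x = Φ.mulVec r s})
    (hfin : ∀ (J : S → ℝ) (s : S),
      ({x : ℝ | ∃ r : Fin k → ℝ,
        (∀ i : Fin m,
          ∑ p : S × A, W p i * (g p.2 p.1 + α * (P p.2).mulVec J p.1)
            ≤ ∑ p : S × A, W p i * Φ.mulVec r p.1) ∧
        x = Φ.mulVec r s}).Nonempty ∧
      BddBelow {x : ℝ | ∃ r : Fin k → ℝ,
        (∀ i : Fin m,
          ∑ p : S × A, W p i * (g p.2 p.1 + α * (P p.2).mulVec J p.1)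
            ≤ ∑ p : S × A, W p i * Φ.mulVec r p.1) ∧
        x = Φ.mulVec r s}) :
    (∀ J J' : S → ℝ,
      (⨆ s, |Γhat J s - Γhat J' s| / ψ s) ≤ βψ * ⨆ s, |J s - J' s| / ψ s) ∧
    (∃! Jfix : S → ℝ, Γhat Jfix = Jfix) := by

  classical
  -- boundedness of the finite suprema
  have hbddA : ∀ a : A, BddAbove (Set.range fun s => |(P a).mulVec ψ s| / ψ s) :=
    fun a => Set.Finite.bddAbove (Set.finite_range _)
  have hbddO : BddAbove (Set.range fun a => ⨆ s, |(P a).mulVec ψ s| / ψ s) :=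
    Set.Finite.bddAbove (Set.finite_range _)
  have hbddJ : ∀ J J' : S → ℝ, BddAbove (Set.range fun s => |J s - J' s| / ψ s) :=
    fun J J' => Set.Finite.bddAbove (Set.finite_range _)
  have hβnn : 0 ≤ βψ := by
    obtain ⟨a⟩ := (inferInstance : Nonempty A)
    obtain ⟨s⟩ := (inferInstance : Nonempty S)
    have h1 : (0:ℝ) ≤ |(P a).mulVec ψ s| / ψ s := div_nonneg (abs_nonneg _) (hψpos s).le
    have h2 := le_ciSup (hbddA a) s
    have h3 := le_ciSup hbddO a
    rw [hβψ]
    exact mul_nonneg hα0.le (h1.trans (h2.trans h3))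
  have hPψ : ∀ (a : A) (t : S), α * (P a).mulVec ψ t ≤ βψ * ψ t := by
    intro a t
    have h1 : (P a).mulVec ψ t ≤ |(P a).mulVec ψ t| := le_abs_self _
    have hle : |(P a).mulVec ψ t| / ψ t ≤ ⨆ a, ⨆ s, |(P a).mulVec ψ s| / ψ s :=
      (le_ciSup (hbddA a) t).trans (le_ciSup hbddO a)
    have h3 : |(P a).mulVec ψ t| ≤ (⨆ a, ⨆ s, |(P a).mulVec ψ s| / ψ s) * ψ t := by
      rw [← div_mul_cancel₀ |(P a).mulVec ψ t| (hψpos t).ne']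
      exact mul_le_mul_of_nonneg_right hle (hψpos t).le
    rw [hβψ, mul_assoc]
    exact mul_le_mul_of_nonneg_left (h1.trans h3) hα0.le
  -- key monotone-translation lemma
  have keyA : ∀ (J J' : S → ℝ) (c : ℝ), 0 ≤ c → (∀ t, J t ≤ J' t + c * ψ t) →
      ∀ s, Γhat J s ≤ Γhat J' s + βψ * c * ψ s := by
    intro J J' c hc hle s
    rw [hΓ J s, hΓ J' s, ← sub_le_iff_le_add]
    apply le_csInf (hfin J' s).1
    rintro x ⟨r, hr, rfl⟩
    rw [sub_le_iff_le_add]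
    have hmulVec : ∀ t : S, Φ.mulVec (r + (βψ * c) • r₀) t = Φ.mulVec r t + βψ * c * ψ t := by
      intro t
      rw [Matrix.mulVec_add, Matrix.mulVec_smul]
      simp [hψspan, Pi.smul_apply, smul_eq_mul]
    have hfeas : ∀ i : Fin m,
        ∑ p : S × A, W p i * (g p.2 p.1 + α * (P p.2).mulVec J p.1)
          ≤ ∑ p : S × A, W p i * Φ.mulVec (r + (βψ * c) • r₀) p.1 := by
      intro i
      have hpt : ∀ p : S × A, W p i * (g p.2 p.1 + α * (P p.2).mulVec J p.1)
          ≤ W p i * (g p.2 p.1 + α * (P p.2).mulVec J' p.1) + W p i * (βψ * c * ψ p.1) := by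
        intro p
        have hJle : (P p.2).mulVec J p.1 ≤ (P p.2).mulVec J' p.1 + c * (P p.2).mulVec ψ p.1 := by
          simp only [Matrix.mulVec, dotProduct]
          rw [Finset.mul_sum, ← Finset.sum_add_distrib]
          apply Finset.sum_le_sum
          intro s' _
          have h1 := hle s'
          have h0 := hPnn p.2 p.1 s'
          nlinarith
        have h2 : c * (α * (P p.2).mulVec ψ p.1) ≤ c * (βψ * ψ p.1) :=
          mul_le_mul_of_nonneg_left (hPψ p.2 p.1) hc
        have h1 : α * (P p.2).mulVec J p.1 ≤ α * (P p.2).mulVec J' p.1 + βψ * c * ψ p.1 := by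
          nlinarith
        have hWnn := hW p i
        nlinarith
      calc ∑ p : S × A, W p i * (g p.2 p.1 + α * (P p.2).mulVec J p.1)
          ≤ ∑ p : S × A, (W p i * (g p.2 p.1 + α * (P p.2).mulVec J' p.1)
              + W p i * (βψ * c * ψ p.1)) := Finset.sum_le_sum fun p _ => hpt p
        _ = (∑ p : S × A, W p i * (g p.2 p.1 + α * (P p.2).mulVec J' p.1))
              + ∑ p : S × A, W p i * (βψ * c * ψ p.1) := Finset.sum_add_distrib
        _ ≤ (∑ p : S × A, W p i * Φ.mulVec r p.1)
              + ∑ p : S × A, W p i * (βψ * c * ψ p.1) := add_le_add_left (hr i) _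
        _ = ∑ p : S × A, W p i * Φ.mulVec (r + (βψ * c) • r₀) p.1 := by
            rw [← Finset.sum_add_distrib]
            refine Finset.sum_congr rfl fun p _ => ?_
            rw [hmulVec p.1]; ring
    have hmem : Φ.mulVec r s + βψ * c * ψ s ∈
        {x : ℝ | ∃ r' : Fin k → ℝ,
          (∀ i : Fin m,
            ∑ p : S × A, W p i * (g p.2 p.1 + α * (P p.2).mulVec J p.1)
              ≤ ∑ p : S × A, W p i * Φ.mulVec r' p.1) ∧
          x = Φ.mulVec r' s} := ⟨r + (βψ * c) • r₀, hfeas, (hmulVec s).symm⟩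
    exact csInf_le (hfin J s).2 hmem
  -- pointwise contraction bound
  have keyB : ∀ (J J' : S → ℝ) (s : S),
      |Γhat J s - Γhat J' s| ≤ βψ * (⨆ t, |J t - J' t| / ψ t) * ψ s := by
    intro J J' s
    set c := ⨆ t, |J t - J' t| / ψ t with hcdef
    have hcnn : 0 ≤ c := by
      obtain ⟨t⟩ := (inferInstance : Nonempty S)
      exact le_trans (div_nonneg (abs_nonneg _) (hψpos t).le) (le_ciSup (hbddJ J J') t)
    have hterm : ∀ t, |J t - J' t| ≤ c * ψ t := by
      intro t
      have h := le_ciSup (hbddJ J J') t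
      rw [div_le_iff₀ (hψpos t)] at h
      exact h
    have h1 : ∀ t, J t ≤ J' t + c * ψ t := by
      intro t; have := hterm t; have := le_abs_self (J t - J' t); linarith
    have h2 : ∀ t, J' t ≤ J t + c * ψ t := by
      intro t; have := hterm t; have := neg_abs_le (J t - J' t); linarith
    have hA := keyA J J' c hcnn h1 s
    have hB := keyA J' J c hcnn h2 s
    rw [abs_le]
    constructor <;> linarith
  -- part 1
  have part1 : ∀ J J' : S → ℝ,
      (⨆ s, |Γhat J s - Γhat J' s| / ψ s) ≤ βψ * ⨆ s, |J s - J' s| / ψ s := by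
    intro J J'
    apply ciSup_le
    intro s
    rw [div_le_iff₀ (hψpos s)]
    exact keyB J J' s
  refine ⟨part1, ?_⟩
  -- conjugated operator
  set T : (S → ℝ) → S → ℝ := fun F s => Γhat (fun t => F t * ψ t) s / ψ s with hTdef
  have hlip : LipschitzWith βψ.toNNReal T := by
    apply LipschitzWith.of_dist_le_mul
    intro F G
    rw [dist_pi_le_iff (mul_nonneg (by positivity) dist_nonneg)]
    intro s
    have hc' : (⨆ t, |F t * ψ t - G t * ψ t| / ψ t) ≤ dist F G := by
      apply ciSup_le
      intro t
      have : |F t * ψ t - G t * ψ t| / ψ t = |F t - G t| := by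
        rw [← sub_mul, abs_mul, abs_of_pos (hψpos t), mul_div_assoc,
          div_self (hψpos t).ne', mul_one]
      rw [this, ← Real.dist_eq]
      exact dist_le_pi_dist F G t
    have hkb := keyB (fun t => F t * ψ t) (fun t => G t * ψ t) s
    have hTs : T F s - T G s
        = (Γhat (fun t => F t * ψ t) s - Γhat (fun t => G t * ψ t) s) / ψ s := by
      simp [hTdef, div_sub_div_same]
    rw [Real.dist_eq, hTs, abs_div, abs_of_pos (hψpos s), div_le_iff₀ (hψpos s)]
    have hcoe : (βψ.toNNReal : ℝ) = βψ := Real.coe_toNNReal _ hβnn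
    rw [hcoe]
    calc |Γhat (fun t => F t * ψ t) s - Γhat (fun t => G t * ψ t) s|
        ≤ βψ * (⨆ t, |F t * ψ t - G t * ψ t| / ψ t) * ψ s := hkb
      _ ≤ βψ * dist F G * ψ s := by
          apply mul_le_mul_of_nonneg_right _ (hψpos s).le
          exact mul_le_mul_of_nonneg_left hc' hβnn
  have hcontr : ContractingWith βψ.toNNReal T := by
    refine ⟨?_, hlip⟩
    rw [← NNReal.coe_lt_coe, Real.coe_toNNReal _ hβnn, NNReal.coe_one]
    exact hβψ1
  set F : S → ℝ := ContractingWith.fixedPoint T hcontr with hF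
  have hfix : T F = F := hcontr.fixedPoint_isFixedPt
  set Jfix : S → ℝ := fun s => F s * ψ s with hJ
  have hJfix : Γhat Jfix = Jfix := by
    funext s
    have := congrFun hfix s
    simp only [hTdef] at this
    have h := (div_eq_iff (hψpos s).ne').mp this
    simpa [hJ] using h
  refine ⟨Jfix, hJfix, ?_⟩
  intro J' hJ'
  have hle := part1 J' Jfix
  rw [hJ', hJfix] at hle
  set c := ⨆ s, |J' s - Jfix s| / ψ s with hcdef
  have hcnn : 0 ≤ c := by
    obtain ⟨t⟩ := (inferInstance : Nonempty S)
    exact le_trans (div_nonneg (abs_nonneg _) (hψpos t).le) (le_ciSup (hbddJ J' Jfix) t)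
  have hc0 : c ≤ 0 := by nlinarith
  funext s
  have h := le_ciSup (hbddJ J' Jfix) s
  have h0 : |J' s - Jfix s| / ψ s ≤ 0 := le_trans h hc0
  have h1 : (0:ℝ) ≤ |J' s - Jfix s| / ψ s := div_nonneg (abs_nonneg _) (hψpos s).le
  have : |J' s - Jfix s| = 0 := by
    have heq := le_antisymm h0 h1
    rcases div_eq_zero_iff.mp heq with h | h
    · exact h
    · exact absurd h (hψpos s).ne'
  have := abs_eq_zero.mp this
  linarith [sub_eq_zero.mp this]
end

section
/- Let û be a policy that is greedy with respect to Ĵ ∈ ℝ^S (i.e., T_û Ĵ = T Ĵ), with value function J_û = (I − αP_û)^{-1} g_û. Let ψ : S → (0,∞) with β_ψ = α max_a ‖P_aψ‖_{∞,ψ} < 1, and c ∈ ℝ₊^S. Then ‖J_û − Ĵ‖_{1,c} ≤ (cᵀψ / (1−β_ψ)) · ‖TĴ − Ĵ‖_{∞,ψ}. -/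
open Matrix

/-- if û is greedy w.r.t. Ĵ and J_û is its value function, then
‖J_û − Ĵ‖_{1,c} ≤ (cᵀψ/(1−β_ψ)) · ‖TĴ − Ĵ‖_{∞,ψ}. -/
theorem stmt19 {S A : Type*} [Fintype S] [Nonempty S] [Fintype A] [Nonempty A]
    (α : ℝ) (hα0 : 0 < α) (hα1 : α < 1)
    (g : A → S → ℝ) (P : A → Matrix S S ℝ)
    (hPnn : ∀ a s s', 0 ≤ P a s s') (hProw : ∀ a s, ∑ s', P a s s' = 1)
    (ψ : S → ℝ) (hψpos : ∀ s, 0 < ψ s)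
    (βψ : ℝ) (hβψ : βψ = α * ⨆ a, ⨆ s, |(P a).mulVec ψ s| / ψ s)
    (hβψ1 : βψ < 1)
    (c : S → ℝ) (hc : ∀ s, 0 ≤ c s)
    (Jhat : S → ℝ) (uhat : S → A)
    (hgreedy : ∀ s, g (uhat s) s + α * (P (uhat s)).mulVec Jhat s
      = ⨆ a, (g a s + α * (P a).mulVec Jhat s))
    (Ju : S → ℝ)
    (hJu : ∀ s, Ju s = g (uhat s) s + α * (P (uhat s)).mulVec Ju s) :
    ∑ s, c s * |Ju s - Jhat s|
      ≤ ((∑ s, c s * ψ s) / (1 - βψ))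
        * ⨆ s, |(⨆ a, (g a s + α * (P a).mulVec Jhat s)) - Jhat s| / ψ s := by
  have bdd : ∀ f : S → ℝ, BddAbove (Set.range f) :=
    fun f => (Set.finite_range f).bddAbove
  set TJ : S → ℝ := fun s => ⨆ a, (g a s + α * (P a).mulVec Jhat s) with hTJ
  set ε : ℝ := ⨆ s, |TJ s - Jhat s| / ψ s with hε
  set M : ℝ := ⨆ s, |Ju s - Jhat s| / ψ s with hM
  have h1β : 0 < 1 - βψ := by linarith
  -- basic sup facts
  have hεs : ∀ s, |TJ s - Jhat s| ≤ ε * ψ s := by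
    intro s
    have := le_ciSup (bdd fun s => |TJ s - Jhat s| / ψ s) s
    rw [div_le_iff₀ (hψpos s)] at this
    simpa [hε] using this
  have hMs : ∀ s, |Ju s - Jhat s| ≤ M * ψ s := by
    intro s
    have := le_ciSup (bdd fun s => |Ju s - Jhat s| / ψ s) s
    rw [div_le_iff₀ (hψpos s)] at this
    simpa [hM] using this
  have hε0 : 0 ≤ ε := by
    obtain ⟨s⟩ := ‹Nonempty S›
    exact le_trans (div_nonneg (abs_nonneg _) (hψpos s).le)
      (le_ciSup (bdd fun s => |TJ s - Jhat s| / ψ s) s)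
  have hM0 : 0 ≤ M := by
    obtain ⟨s⟩ := ‹Nonempty S›
    exact le_trans (div_nonneg (abs_nonneg _) (hψpos s).le)
      (le_ciSup (bdd fun s => |Ju s - Jhat s| / ψ s) s)
  -- α·(P_a ψ)(s) ≤ βψ·ψ(s)
  have hPψpos : ∀ a s, 0 ≤ (P a).mulVec ψ s := by
    intro a s
    simp only [Matrix.mulVec, dotProduct]
    exact Finset.sum_nonneg fun s' _ => mul_nonneg (hPnn a s s') (hψpos s').le
  have hPψ : ∀ a s, α * (P a).mulVec ψ s ≤ βψ * ψ s := by
    intro a s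
    have h1 : |(P a).mulVec ψ s| / ψ s ≤ ⨆ s, |(P a).mulVec ψ s| / ψ s :=
      le_ciSup (f := fun s => |(P a).mulVec ψ s| / ψ s) (bdd _) s
    have h2 : (⨆ s, |(P a).mulVec ψ s| / ψ s)
        ≤ ⨆ a, ⨆ s, |(P a).mulVec ψ s| / ψ s :=
      le_ciSup (f := fun a => ⨆ s, |(P a).mulVec ψ s| / ψ s)
        ((Set.finite_range _).bddAbove) a
    have h3 : (P a).mulVec ψ s ≤ (⨆ a, ⨆ s, |(P a).mulVec ψ s| / ψ s) * ψ s := by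
      have := le_trans h1 h2
      rw [div_le_iff₀ (hψpos s)] at this
      calc (P a).mulVec ψ s ≤ |(P a).mulVec ψ s| := le_abs_self _
        _ ≤ _ := this
    calc α * (P a).mulVec ψ s
        ≤ α * ((⨆ a, ⨆ s, |(P a).mulVec ψ s| / ψ s) * ψ s) := by
          exact mul_le_mul_of_nonneg_left h3 hα0.le
      _ = βψ * ψ s := by rw [hβψ]; ring
  -- key pointwise bound
  have hkey : ∀ s, |Ju s - Jhat s| ≤ (ε + βψ * M) * ψ s := by
    intro s
    have hdiff : Ju s - Jhat s
        = (TJ s - Jhat s) + α * ∑ s', P (uhat s) s s' * (Ju s' - Jhat s') := by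
      simp only [hTJ]
      rw [← hgreedy s, hJu s]
      simp only [Matrix.mulVec, dotProduct]
      rw [Finset.mul_sum, Finset.mul_sum, Finset.mul_sum]
      rw [show (∑ s', α * (P (uhat s) s s' * (Ju s' - Jhat s')))
          = ∑ s', (α * (P (uhat s) s s' * Ju s') - α * (P (uhat s) s s' * Jhat s'))
          from Finset.sum_congr rfl (fun s' _ => by ring)]
      rw [Finset.sum_sub_distrib]
      ring
    calc |Ju s - Jhat s|
        ≤ |TJ s - Jhat s| + |α * ∑ s', P (uhat s) s s' * (Ju s' - Jhat s')| := by
          rw [hdiff]; exact abs_add_le _ _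
      _ ≤ ε * ψ s + α * ∑ s', P (uhat s) s s' * (M * ψ s') := by
          refine add_le_add (hεs s) ?_
          rw [abs_mul, abs_of_pos hα0]
          refine mul_le_mul_of_nonneg_left ?_ hα0.le
          refine le_trans (Finset.abs_sum_le_sum_abs _ _) ?_
          refine Finset.sum_le_sum fun s' _ => ?_
          rw [abs_mul, abs_of_nonneg (hPnn _ _ _)]
          exact mul_le_mul_of_nonneg_left (le_trans (le_abs_self _) (by
            rw [abs_abs]; exact hMs s')) (hPnn _ _ _)
      _ = ε * ψ s + M * (α * (P (uhat s)).mulVec ψ s) := by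
          simp only [Matrix.mulVec, dotProduct]
          rw [Finset.mul_sum, Finset.mul_sum, Finset.mul_sum]
          congr 1
          exact Finset.sum_congr rfl fun s' _ => by ring
      _ ≤ ε * ψ s + M * (βψ * ψ s) :=
          add_le_add_right (mul_le_mul_of_nonneg_left (hPψ _ _) hM0) _
      _ = (ε + βψ * M) * ψ s := by ring
  -- M ≤ ε + βψ M
  have hMle : M ≤ ε + βψ * M := by
    refine ciSup_le fun s => ?_
    rw [div_le_iff₀ (hψpos s)]
    exact hkey s
  have hMfin : M ≤ ε / (1 - βψ) := by
    rw [le_div_iff₀ h1β]; nlinarith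
  -- conclude
  have hcψ : 0 ≤ ∑ s, c s * ψ s :=
    Finset.sum_nonneg fun s _ => mul_nonneg (hc s) (hψpos s).le
  calc ∑ s, c s * |Ju s - Jhat s|
      ≤ ∑ s, c s * (M * ψ s) :=
        Finset.sum_le_sum fun s _ => mul_le_mul_of_nonneg_left (hMs s) (hc s)
    _ = (∑ s, c s * ψ s) * M := by rw [Finset.sum_mul]; exact Finset.sum_congr rfl fun s _ => by ring
    _ ≤ (∑ s, c s * ψ s) * (ε / (1 - βψ)) := mul_le_mul_of_nonneg_left hMfin hcψ
    _ = ((∑ s, c s * ψ s) / (1 - βψ)) * ε := by ring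
end
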